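/- arXiv:1202.3901 — 4 statements merged into one kernel-verified Lean document; each statement's English description precedes it below -/
import Mathlib

section
/- Let $\varphi_m(x, y) = q^{(m-1)(y-x)} \mathbf{1}_{x \le y}$ for $x, y \in \mathbb{Z}$ and $0 < q < 1$. Then for integers $0 \le n_1 < n_2$, the iterated convolution satisfies $(\varphi_{n_1+1} * \cdots * \varphi_{n_2})(x, y) = \mathbf{1}_{x \le y} \, q^{n_1(y-x)} \frac{(q^{y-x+1}; q)_{n_2 - n_1 - 1}}{(q; q)_{n_2 - n_1 - 1}}$. -/
/-- `φ_m(x,y) = q^{(m-1)(y-x)} 1_{x ≤ y}`. -/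
noncomputable def phi (q : ℝ) (m : ℕ) (x y : ℤ) : ℝ :=
  if x ≤ y then q ^ (((m : ℤ) - 1) * (y - x)) else 0

/-- Convolution `(f * g)(x,y) = ∑_{z ∈ ℤ} f(x,z) g(z,y)`. -/
noncomputable def conv (f g : ℤ → ℤ → ℝ) : ℤ → ℤ → ℝ :=
  fun x y => ∑' z : ℤ, f x z * g z y

/-- `iterConv q n1 k = φ_{n1+1} * φ_{n1+2} * ⋯ * φ_{n1+k+1}`. -/
noncomputable def iterConv (q : ℝ) (n1 : ℕ) : ℕ → ℤ → ℤ → ℝ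
  | 0 => phi q (n1 + 1)
  | k + 1 => conv (iterConv q n1 k) (phi q (n1 + k + 2))

lemma stmt3_sumid (q : ℝ) (k m : ℕ) :
    (1 - q ^ (k+1)) * ∑ d ∈ Finset.range (m+1),
      q ^ ((k+1)*(m-d)) * ∏ i ∈ Finset.range k, (1 - q ^ (d+1+i)) =
    ∏ i ∈ Finset.range (k+1), (1 - q ^ (m+1+i)) := by
  induction m with
  | zero =>
    rw [Finset.sum_range_one, Finset.prod_range_succ]
    ring
  | succ m ih =>
    rw [Finset.sum_range_succ]
    have hsum : ∑ d ∈ Finset.range (m+1),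
        q ^ ((k+1)*(m+1-d)) * ∏ i ∈ Finset.range k, (1 - q ^ (d+1+i)) =
        q^(k+1) * ∑ d ∈ Finset.range (m+1),
        q ^ ((k+1)*(m-d)) * ∏ i ∈ Finset.range k, (1 - q ^ (d+1+i)) := by
      rw [Finset.mul_sum]
      refine Finset.sum_congr rfl fun d hd => ?_
      rw [Finset.mem_range] at hd
      have h1 : m+1-d = (m-d)+1 := by omega
      rw [h1, Nat.mul_succ, pow_add]
      ring
    rw [hsum]
    have hPk : ∏ i ∈ Finset.range k, (1 - q ^ ((m+1)+1+i)) =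
        ∏ i ∈ Finset.range k, (1 - q ^ (m+2+i)) :=
      Finset.prod_congr rfl fun i _ => by rw [show (m+1)+1+i = m+2+i from by omega]
    have hA : ∏ i ∈ Finset.range (k+1), (1 - q ^ (m+1+i)) =
        (1 - q^(m+1)) * ∏ i ∈ Finset.range k, (1 - q ^ (m+2+i)) := by
      have hA' : ∏ i ∈ Finset.range k, (1 - q ^ (m+1+(i+1))) =
          ∏ i ∈ Finset.range k, (1 - q ^ (m+2+i)) :=
        Finset.prod_congr rfl fun i _ => by rw [show m+1+(i+1) = m+2+i from by omega]
      rw [Finset.prod_range_succ', hA', show m+1+0 = m+1 from by omega, mul_comm]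
    have hB : ∏ i ∈ Finset.range (k+1), (1 - q ^ ((m+1)+1+i)) =
        (∏ i ∈ Finset.range k, (1 - q ^ (m+2+i))) * (1 - q^(m+2+k)) := by
      rw [Finset.prod_range_succ, hPk, show (m+1)+1+k = m+2+k from by omega]
    have hq2 : q^(m+2+k) = q^(k+1) * q^(m+1) := by
      rw [← pow_add]
      congr 1
      omega
    rw [mul_add, ← mul_assoc, mul_comm (1 - q^(k+1)) (q^(k+1)), mul_assoc, ih, hPk, hB, hA, hq2,
      show m + 1 - (m+1) = 0 from by omega]
    ring

lemma stmt3_main (q : ℝ) (hq0 : 0 < q) (hq1 : q < 1) (n1 k : ℕ) (x y : ℤ) :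
    iterConv q n1 k x y =
      if x ≤ y then
        q ^ ((n1 : ℤ) * (y - x)) *
          ((∏ i ∈ Finset.range k, (1 - q ^ (y - x + 1) * q ^ i)) /
            ∏ i ∈ Finset.range k, (1 - q * q ^ i))
      else 0 := by
  have hqne : q ≠ 0 := ne_of_gt hq0
  induction k generalizing x y with
  | zero =>
    by_cases hxy : x ≤ y
    · simp only [iterConv, phi, if_pos hxy, Finset.range_zero, Finset.prod_empty]
      have he : ((n1 + 1 : ℕ) : ℤ) - 1 = (n1 : ℤ) := by push_cast; ring
      rw [he]
      ring
    · simp [iterConv, phi, hxy]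
  | succ k ih =>
    have hfz : ∀ z : ℤ, iterConv q n1 k x z * phi q (n1 + k + 2) z y =
        if x ≤ z ∧ z ≤ y then
          q ^ ((n1:ℤ) * (z - x)) *
            ((∏ i ∈ Finset.range k, (1 - q ^ (z - x + 1) * q ^ i)) /
              ∏ i ∈ Finset.range k, (1 - q * q ^ i)) *
          q ^ (((n1:ℤ) + k + 1) * (y - z))
        else 0 := by
      intro z
      rw [ih]
      unfold phi
      have he : ((n1 + k + 2 : ℕ) : ℤ) - 1 = (n1:ℤ) + k + 1 := by push_cast; ring
      by_cases h1 : x ≤ z <;> by_cases h2 : z ≤ y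
      · rw [if_pos h1, if_pos h2, if_pos ⟨h1, h2⟩, he]
      · rw [if_pos h1, if_neg h2, if_neg (by tauto), mul_zero]
      · rw [if_neg h1, if_pos h2, if_neg (by tauto), zero_mul]
      · rw [if_neg h1, if_neg h2, if_neg (by tauto), zero_mul]
    show conv (iterConv q n1 k) (phi q (n1 + k + 2)) x y = _
    unfold conv
    by_cases hxy : x ≤ y
    · set m := (y - x).toNat with hmdef
      have hm : (m : ℤ) = y - x := Int.toNat_of_nonneg (by omega)
      have hsum : (∑' z : ℤ, iterConv q n1 k x z * phi q (n1+k+2) z y)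
          = ∑ z ∈ Finset.Icc x y, iterConv q n1 k x z * phi q (n1+k+2) z y := by
        apply tsum_eq_sum
        intro z hz
        rw [Finset.mem_Icc] at hz
        rw [hfz, if_neg hz]
      rw [hsum]
      have hinj : Function.Injective (fun d : ℕ => x + (d:ℤ)) := fun a b h => by simpa using h
      have hmap : Finset.Icc x y = Finset.map ⟨fun d : ℕ => x + (d:ℤ), hinj⟩ (Finset.range (m+1)) := by
        ext z
        simp only [Finset.mem_Icc, Finset.mem_map, Finset.mem_range, Function.Embedding.coeFn_mk]
        constructor
        · intro hz; exact ⟨(z - x).toNat, by omega, by omega⟩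
        · rintro ⟨a, ha, rfl⟩; omega
      rw [hmap, Finset.sum_map]
      simp only [Function.Embedding.coeFn_mk]
      have hDk : ∀ j : ℕ, ∏ i ∈ Finset.range j, (1 - q ^ (1+i)) ≠ 0 := by
        intro j
        refine ne_of_gt (Finset.prod_pos fun i _ => ?_)
        have : q ^ (1+i) < 1 := pow_lt_one₀ hq0.le hq1 (by omega)
        linarith
      have hk1 : (1 : ℝ) - q^(k+1) ≠ 0 := by
        have : q ^ (k+1) < 1 := pow_lt_one₀ hq0.le hq1 (by omega)
        linarith
      have hterm : ∀ d ∈ Finset.range (m+1),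
          iterConv q n1 k x (x + (d:ℤ)) * phi q (n1+k+2) (x + (d:ℤ)) y
          = q ^ (n1 * m) * (q ^ ((k+1)*(m-d)) * ∏ i ∈ Finset.range k, (1 - q ^ (d+1+i))) /
              ∏ i ∈ Finset.range k, (1 - q ^ (1+i)) := by
        intro d hd
        rw [Finset.mem_range] at hd
        have hdm : d ≤ m := by omega
        rw [hfz, if_pos ⟨by omega, by omega⟩]
        have h1 : x + (d:ℤ) - x = ((d : ℕ) : ℤ) := by ring
        have h2 : y - (x + (d:ℤ)) = ((m - d : ℕ) : ℤ) := by
          push_cast [Nat.cast_sub hdm]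
          omega
        rw [h1, h2]
        have e1 : q ^ ((n1:ℤ) * ((d:ℕ):ℤ)) = q ^ (n1 * d) := by
          rw [show (n1:ℤ) * ((d:ℕ):ℤ) = ((n1*d : ℕ) : ℤ) by push_cast; ring, zpow_natCast]
        have e2 : q ^ (((d:ℕ):ℤ) + 1) = q ^ (d+1) := by
          rw [show ((d:ℕ):ℤ) + 1 = ((d+1 : ℕ) : ℤ) by push_cast; ring, zpow_natCast]
        have e3 : q ^ (((n1:ℤ) + k + 1) * ((m-d:ℕ):ℤ)) = q ^ ((n1+k+1) * (m-d)) := by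
          rw [show ((n1:ℤ) + k + 1) * ((m-d:ℕ):ℤ) = (((n1+k+1) * (m-d) : ℕ) : ℤ) by push_cast; ring,
            zpow_natCast]
        rw [e1, e2, e3]
        have eP : ∏ i ∈ Finset.range k, (1 - q ^ (d+1) * q ^ i) =
            ∏ i ∈ Finset.range k, (1 - q ^ (d+1+i)) := by
          refine Finset.prod_congr rfl fun i _ => ?_
          rw [← pow_add]
        have eD : ∏ i ∈ Finset.range k, (1 - q * q ^ i) =
            ∏ i ∈ Finset.range k, (1 - q ^ (1+i)) := by
          refine Finset.prod_congr rfl fun i _ => ?_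
          rw [pow_add, pow_one]
        rw [eP, eD]
        have hexp : q ^ (n1*d) * q ^ ((n1+k+1)*(m-d)) = q ^ (n1*m) * q ^ ((k+1)*(m-d)) := by
          rw [← pow_add, ← pow_add]
          congr 1
          set c := m - d with hc
          have hcd : c + d = m := by omega
          rw [← hcd]
          ring
        have hrearr : q ^ (n1*d) * ((∏ i ∈ Finset.range k, (1 - q ^ (d+1+i))) /
              ∏ i ∈ Finset.range k, (1 - q ^ (1+i))) * q ^ ((n1+k+1)*(m-d)) =
            q ^ (n1*d) * q ^ ((n1+k+1)*(m-d)) * (∏ i ∈ Finset.range k, (1 - q ^ (d+1+i))) /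
              ∏ i ∈ Finset.range k, (1 - q ^ (1+i)) := by ring
        rw [hrearr, hexp]
        ring
      rw [Finset.sum_congr rfl hterm, ← Finset.sum_div, ← Finset.mul_sum]
      have hS := stmt3_sumid q k m
      rw [if_pos hxy, ← hm]
      have e1 : q ^ ((n1:ℤ) * ((m:ℕ):ℤ)) = q ^ (n1 * m) := by
        rw [show (n1:ℤ) * ((m:ℕ):ℤ) = ((n1*m : ℕ) : ℤ) by push_cast; ring, zpow_natCast]
      have e2 : q ^ (((m:ℕ):ℤ) + 1) = q ^ (m+1) := by
        rw [show ((m:ℕ):ℤ) + 1 = ((m+1 : ℕ) : ℤ) by push_cast; ring, zpow_natCast]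
      rw [e1, e2]
      have eP : ∏ i ∈ Finset.range (k+1), (1 - q ^ (m+1) * q ^ i) =
          ∏ i ∈ Finset.range (k+1), (1 - q ^ (m+1+i)) := by
        refine Finset.prod_congr rfl fun i _ => ?_
        rw [← pow_add]
      have eD : ∏ i ∈ Finset.range (k+1), (1 - q * q ^ i) =
          (∏ i ∈ Finset.range k, (1 - q ^ (1+i))) * (1 - q ^ (k+1)) := by
        have : ∏ i ∈ Finset.range (k+1), (1 - q * q ^ i) =
            ∏ i ∈ Finset.range (k+1), (1 - q ^ (1+i)) := by
          refine Finset.prod_congr rfl fun i _ => ?_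
          rw [pow_add, pow_one]
        rw [this, Finset.prod_range_succ, show 1+k = k+1 from by omega]
      rw [eP, eD, ← mul_div_assoc]
      rw [div_eq_div_iff (hDk k) (mul_ne_zero (hDk k) hk1)]
      linear_combination q ^ (n1*m) * (∏ i ∈ Finset.range k, (1 - q ^ (1+i))) * hS
    · have hz : ∀ z : ℤ, iterConv q n1 k x z * phi q (n1+k+2) z y = 0 := by
        intro z
        rw [hfz, if_neg]
        rintro ⟨h1, h2⟩
        exact hxy (h1.trans h2)
      simp [hz, hxy]

/-- For `0 ≤ n1 < n2`, the iterated convolution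
`(φ_{n1+1} * ⋯ * φ_{n2})(x,y) = 1_{x ≤ y} q^{n1(y-x)} (q^{y-x+1};q)_{n2-n1-1} / (q;q)_{n2-n1-1}`. -/
theorem stmt3 (q : ℝ) (hq0 : 0 < q) (hq1 : q < 1) (n1 n2 : ℕ) (h : n1 < n2) (x y : ℤ) :
    iterConv q n1 (n2 - n1 - 1) x y =
      if x ≤ y then
        q ^ ((n1 : ℤ) * (y - x)) *
          ((∏ i ∈ Finset.range (n2 - n1 - 1), (1 - q ^ (y - x + 1) * q ^ i)) /
            ∏ i ∈ Finset.range (n2 - n1 - 1), (1 - q * q ^ i))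
      else 0 := by
  exact stmt3_main q hq0 hq1 n1 (n2 - n1 - 1) x y
end

section
/- Define the $q$-Stirling numbers of the second kind $S(n, m; q)$ by the generating-function expansion $\prod_{r=1}^n \frac{1}{1 - [r]_q z} = \sum_{m \ge 0} S(n, m; q) z^m$ for small $|z|$, where $[r]_q = \frac{1 - q^r}{1 - q}$. Then $S(n, m; q) = (q-1)^{-m} \sum_{p=0}^m (-1)^p \binom{m+n}{p} \frac{[m+n-p]_q!}{[n]_q! \, [m-p]_q!}$, where $[k]_q! = [k]_q [k-1]_q \cdots [1]_q$. -/
open Finset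

noncomputable def qn (q : ℝ) (r : ℕ) : ℝ := (1 - q ^ r) / (1 - q)
noncomputable def qf (q : ℝ) (k : ℕ) : ℝ := ∏ r ∈ Icc 1 k, qn q r
noncomputable def Uc (q : ℝ) (n m : ℕ) : ℝ :=
  ∑ p ∈ range (m + 1), (-1 : ℝ) ^ p * ((m + n).choose p : ℝ) * qf q (m + n - p) / qf q (m - p)
noncomputable def Sc (q : ℝ) (n m : ℕ) : ℝ :=
  (q - 1) ^ (-(m : ℤ)) *
    ∑ p ∈ range (m + 1),
      (-1 : ℝ) ^ p * ((m + n).choose p : ℝ) * qf q (m + n - p) / (qf q n * qf q (m - p))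

variable {q : ℝ}

lemma qn_pos (hq0 : 0 < q) (hq1 : q < 1) {r : ℕ} (hr : 1 ≤ r) : 0 < qn q r := by
  have h1 : q ^ r < 1 := pow_lt_one₀ hq0.le hq1 (by omega)
  have : (0:ℝ) < 1 - q := by linarith
  exact div_pos (by linarith) this

lemma qf_zero : qf q 0 = 1 := by simp [qf]

lemma qf_succ (k : ℕ) : qf q (k + 1) = qf q k * qn q (k + 1) :=
  Finset.prod_Icc_succ_top (by omega) _

lemma qf_pos (hq0 : 0 < q) (hq1 : q < 1) (k : ℕ) : 0 < qf q k := by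
  induction k with
  | zero => simp [qf_zero]
  | succ k ih => rw [qf_succ]; exact mul_pos ih (qn_pos hq0 hq1 (by omega))

lemma qn_add (hq1 : q < 1) (a b : ℕ) : qn q (a + b) = qn q b + q ^ b * qn q a := by
  have : (1:ℝ) - q ≠ 0 := by intro h; nlinarith
  rw [qn, qn, qn, pow_add]
  field_simp
  ring

lemma qf_ratio (hq0 : 0 < q) (hq1 : q < 1) (n a : ℕ) :
    qf q (a+n+2) / qf q (a+1) =
      qn q (n+1) * (qf q (a+n+1) / qf q (a+1)) + q^(n+1) * (qf q (a+n+1) / qf q a) := by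
  have h0 := (qf_pos hq0 hq1 a).ne'
  have h1 := (qn_pos hq0 hq1 (r := a+1) (by omega)).ne'
  have hadd : qn q (a+n+2) = qn q (n+1) + q^(n+1) * qn q (a+1) := by
    have h := qn_add hq1 (a+1) (n+1)
    rw [show a+1+(n+1) = a+n+2 by omega] at h
    exact h
  rw [show a+n+2 = (a+n+1)+1 by omega, qf_succ, qf_succ a,
    show (a+n+1)+1 = a+n+2 by omega, hadd]
  field_simp

lemma Uc_rec (hq0 : 0 < q) (hq1 : q < 1) (n m : ℕ) :
    Uc q (n+1) (m+1) = qn q (n+1) * Uc q n (m+1) + (q^(n+1) - 1) * Uc q (n+1) m := by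
  set B : ℝ := ∑ p ∈ range (m+1+1),
      (-1:ℝ)^p * ((m+n+1).choose p : ℝ) * qf q (m+n+2-p) / qf q (m+1-p) with hBdef
  have hU0 : Uc q (n+1) m
      = ∑ p ∈ range (m+1), (-1:ℝ)^p * ((m+n+1).choose p : ℝ) * qf q (m+n+1-p) / qf q (m-p) := by
    rw [Uc, show m+(n+1) = m+n+1 by omega]
  have hU1 : Uc q (n+1) (m+1)
      = (∑ p ∈ range (m+1),
          (-1:ℝ)^(p+1) * ((m+n+2).choose (p+1) : ℝ) * qf q (m+n+1-p) / qf q (m-p))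
        + qf q (m+n+2) / qf q (m+1) := by
    rw [Uc, show m+1+(n+1) = m+n+2 by omega, Finset.sum_range_succ']
    congr 1
    · refine Finset.sum_congr rfl fun p hp => ?_
      rw [show m+n+2-(p+1) = m+n+1-p by omega, show m+1-(p+1) = m-p by omega]
    · norm_num
  have hBs : B = (∑ p ∈ range (m+1),
          (-1:ℝ)^(p+1) * ((m+n+1).choose (p+1) : ℝ) * qf q (m+n+1-p) / qf q (m-p))
        + qf q (m+n+2) / qf q (m+1) := by
    rw [hBdef, Finset.sum_range_succ']
    congr 1
    · refine Finset.sum_congr rfl fun p hp => ?_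
      rw [show m+n+2-(p+1) = m+n+1-p by omega, show m+1-(p+1) = m-p by omega]
    · norm_num
  have hsum : ∀ p ∈ range (m+1),
      (-1:ℝ)^(p+1) * ((m+n+2).choose (p+1) : ℝ) * qf q (m+n+1-p) / qf q (m-p)
      = (-1:ℝ)^(p+1) * ((m+n+1).choose (p+1) : ℝ) * qf q (m+n+1-p) / qf q (m-p)
        - (-1:ℝ)^p * ((m+n+1).choose p : ℝ) * qf q (m+n+1-p) / qf q (m-p) := by
    intro p hp
    have hc : (m+n+2).choose (p+1) = (m+n+1).choose p + (m+n+1).choose (p+1) := by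
      rw [show m+n+2 = (m+n+1)+1 by omega]
      exact Nat.choose_succ_succ _ _
    rw [hc]
    push_cast
    ring
  have hB1 : B = Uc q (n+1) (m+1) + Uc q (n+1) m := by
    rw [hBs, hU1, hU0, Finset.sum_congr rfl hsum, Finset.sum_sub_distrib]
    ring
  have hU2 : Uc q n (m+1)
      = ∑ p ∈ range (m+1+1),
          (-1:ℝ)^p * ((m+n+1).choose p : ℝ) * qf q (m+n+1-p) / qf q (m+1-p) := by
    rw [Uc, show m+1+n = m+n+1 by omega]
  have hterm : ∀ p ∈ range (m+1),
      (-1:ℝ)^p * ((m+n+1).choose p : ℝ) * qf q (m+n+2-p) / qf q (m+1-p)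
      = qn q (n+1) * ((-1:ℝ)^p * ((m+n+1).choose p : ℝ) * qf q (m+n+1-p) / qf q (m+1-p))
        + q^(n+1) * ((-1:ℝ)^p * ((m+n+1).choose p : ℝ) * qf q (m+n+1-p) / qf q (m-p)) := by
    intro p hp
    simp only [mem_range] at hp
    rw [show m+n+2-p = (m-p)+n+2 by omega, show m+1-p = (m-p)+1 by omega,
      show m+n+1-p = (m-p)+n+1 by omega, mul_div_assoc, mul_div_assoc, mul_div_assoc,
      qf_ratio hq0 hq1 n (m-p)]
    ring
  have hBs2 : B = (∑ p ∈ range (m+1),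
        (-1:ℝ)^p * ((m+n+1).choose p : ℝ) * qf q (m+n+2-p) / qf q (m+1-p))
      + (-1:ℝ)^(m+1) * ((m+n+1).choose (m+1) : ℝ) * qf q (m+n+2-(m+1)) / qf q (m+1-(m+1)) := by
    rw [hBdef]; exact Finset.sum_range_succ _ _
  have hU2' : Uc q n (m+1) = (∑ p ∈ range (m+1),
        (-1:ℝ)^p * ((m+n+1).choose p : ℝ) * qf q (m+n+1-p) / qf q (m+1-p))
      + (-1:ℝ)^(m+1) * ((m+n+1).choose (m+1) : ℝ) * qf q (m+n+1-(m+1)) / qf q (m+1-(m+1)) :=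
    hU2.trans (Finset.sum_range_succ _ _)
  have hB2 : B = qn q (n+1) * Uc q n (m+1) + q^(n+1) * Uc q (n+1) m := by
    rw [hBs2, hU2', hU0,
      Finset.sum_congr rfl hterm, Finset.sum_add_distrib, ← Finset.mul_sum, ← Finset.mul_sum]
    have htop : (-1:ℝ)^(m+1) * ((m+n+1).choose (m+1) : ℝ) * qf q (m+n+2-(m+1)) / qf q (m+1-(m+1))
        = qn q (n+1) * ((-1:ℝ)^(m+1) * ((m+n+1).choose (m+1) : ℝ) * qf q (m+n+1-(m+1)) / qf q (m+1-(m+1))) := by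
      rw [show m+n+2-(m+1) = n+1 by omega, show m+n+1-(m+1) = n by omega,
        show m+1-(m+1) = 0 by omega, qf_zero, qf_succ]
      ring
    rw [htop]
    ring
  have := hB1.symm.trans hB2
  linarith

lemma Sc_eq (n m : ℕ) : Sc q n m = (q - 1) ^ (-(m : ℤ)) * (Uc q n m / qf q n) := by
  rw [Sc, Uc, Finset.sum_div]
  congr 1
  refine Finset.sum_congr rfl fun p _ => ?_
  rw [div_div, mul_comm (qf q (m - p))]

lemma Sc_zero_right (hq0 : 0 < q) (hq1 : q < 1) (n : ℕ) : Sc q n 0 = 1 := by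
  have h := (qf_pos hq0 hq1 n).ne'
  simp [Sc, qf_zero, h]

lemma Sc_rec (hq0 : 0 < q) (hq1 : q < 1) (n m : ℕ) :
    Sc q (n+1) (m+1) = qn q (n+1) * Sc q (n+1) m + Sc q n (m+1) := by
  have hc : q - 1 ≠ 0 := by intro h; nlinarith
  have hfn := (qf_pos hq0 hq1 n).ne'
  have hfn1 := (qf_pos hq0 hq1 (n+1)).ne'
  have hqn := (qn_pos hq0 hq1 (r := n+1) (by omega)).ne'
  rw [Sc_eq, Sc_eq, Sc_eq, Uc_rec hq0 hq1 n m]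
  have hz : ((q - 1 : ℝ)) ^ (-((m+1 : ℕ) : ℤ)) = (q - 1) ^ (-(m : ℤ)) / (q - 1) := by
    rw [show (-((m+1 : ℕ) : ℤ)) = -(m : ℤ) + (-1) by push_cast; ring, zpow_add₀ hc,
      zpow_neg_one, div_eq_mul_inv]
  rw [hz, qf_succ n]
  have h1q : (1:ℝ) - q ≠ 0 := by intro h; nlinarith
  have hqn1 : qn q (n+1) * (q - 1) = q^(n+1) - 1 := by
    rw [qn, div_mul_eq_mul_div, div_eq_iff h1q]
    ring
  rw [show q^(n+1) - 1 = qn q (n+1) * (q - 1) from hqn1.symm]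
  field_simp
  ring

lemma Sc_succ_left (hq0 : 0 < q) (hq1 : q < 1) (n m : ℕ) :
    Sc q (n+1) m = ∑ k ∈ range (m+1), Sc q n k * qn q (n+1) ^ (m - k) := by
  induction m with
  | zero => simp [Sc_zero_right hq0 hq1]
  | succ m ih =>
    rw [Sc_rec hq0 hq1, ih, Finset.mul_sum, Finset.sum_range_succ (n := m+1),
      show m+1-(m+1) = 0 by omega, pow_zero, mul_one]
    congr 1
    refine Finset.sum_congr rfl fun k hk => ?_
    simp only [mem_range] at hk
    rw [show m+1-k = (m-k)+1 by omega, pow_succ]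
    ring

lemma Sc_zero_left (hq0 : 0 < q) (hq1 : q < 1) {m : ℕ} (hm : m ≠ 0) : Sc q 0 m = 0 := by
  have hne : ∀ p : ℕ, qf q (m - p) ≠ 0 := fun p => (qf_pos hq0 hq1 _).ne'
  rw [Sc]
  have h1 : ∑ p ∈ range (m+1),
      (-1:ℝ)^p * ((m+0).choose p : ℝ) * qf q (m+0-p) / (qf q 0 * qf q (m-p))
      = ∑ p ∈ range (m+1), (-1:ℝ)^p * (m.choose p : ℝ) := by
    refine Finset.sum_congr rfl fun p hp => ?_
    rw [Nat.add_zero, qf_zero, one_mul, mul_div_assoc, div_self (hne p), mul_one]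
  rw [h1]
  have h3 : ∑ p ∈ range (m+1), (-1:ℝ)^p * (m.choose p : ℝ) = 0 := by
    have h := congrArg (fun x : ℤ => (x : ℝ)) (Int.alternating_sum_range_choose_of_ne hm)
    push_cast at h
    simpa using h
  rw [h3, mul_zero]

lemma main_hasSum (hq0 : 0 < q) (hq1 : q < 1) (n : ℕ) :
    ∃ ε > (0:ℝ), ∀ z : ℝ, |z| < ε →
      HasSum (fun m => Sc q n m * z ^ m) (∏ r ∈ Icc 1 n, (1 - qn q r * z)⁻¹) := by
  induction n with
  | zero =>
    refine ⟨1, one_pos, fun z hz => ?_⟩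
    have h0 : ∀ m : ℕ, m ≠ 0 → Sc q 0 m * z ^ m = 0 := fun m hm => by
      rw [Sc_zero_left hq0 hq1 hm, zero_mul]
    have h := hasSum_single (f := fun m : ℕ => Sc q 0 m * z ^ m) 0 (fun b hb => h0 b hb)
    simpa [Sc_zero_right hq0 hq1] using h
  | succ n ih =>
    obtain ⟨ε, hε, H⟩ := ih
    set M := qn q (n+1) with hM
    have hMpos : 0 < M := qn_pos hq0 hq1 (by omega)
    refine ⟨min ε (M+1)⁻¹, lt_min hε (by positivity), fun z hz => ?_⟩
    have hz1 : |z| < ε := lt_of_lt_of_le hz (min_le_left _ _)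
    have hz2 : |M * z| < 1 := by
      rw [abs_mul, abs_of_pos hMpos]
      calc M * |z| < M * (M+1)⁻¹ :=
            mul_lt_mul_of_pos_left (lt_of_lt_of_le hz (min_le_right _ _)) hMpos
        _ < 1 := by
            rw [← div_eq_mul_inv]
            exact (div_lt_one (by positivity)).mpr (by linarith)
    have h1 := H z hz1
    have h2 : HasSum (fun m : ℕ => (M*z)^m) (1 - M*z)⁻¹ := hasSum_geometric_of_abs_lt_one hz2
    have hf : Summable fun m : ℕ => ‖Sc q n m * z^m‖ := by
      simp only [Real.norm_eq_abs]
      exact summable_abs_iff.mpr h1.summable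
    have hg : Summable fun m : ℕ => ‖(M*z)^m‖ := by
      simp only [Real.norm_eq_abs]
      exact summable_abs_iff.mpr h2.summable
    have key := hasSum_sum_range_mul_of_summable_norm hf hg
    rw [h1.tsum_eq, h2.tsum_eq] at key
    have heq : (fun m : ℕ => ∑ k ∈ range (m+1), (Sc q n k * z^k) * (M*z)^(m-k))
        = fun m : ℕ => Sc q (n+1) m * z^m := by
      funext m
      rw [Sc_succ_left hq0 hq1 n m, Finset.sum_mul]
      refine Finset.sum_congr rfl fun k hk => ?_
      simp only [mem_range] at hk
      have hzz : z^k * z^(m-k) = z^m := by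
        rw [← pow_add, show k + (m-k) = m by omega]
      rw [mul_pow, show Sc q n k * z^k * (M^(m-k) * z^(m-k))
          = Sc q n k * M^(m-k) * (z^k * z^(m-k)) by ring, hzz]
    rw [heq] at key
    rw [Finset.prod_Icc_succ_top (by omega : 1 ≤ n+1)]
    exact key

/-- Explicit formula for the `q`-Stirling numbers of the second kind: the coefficients
in the expansion `∏_{r=1}^n (1 - [r]_q z)⁻¹ = ∑_m S(n,m;q) z^m` (for `|z|` small) are
given by `S(n,m;q) = (q-1)^{-m} ∑_{p=0}^m (-1)^p C(m+n, p) [m+n-p]_q! / ([n]_q! [m-p]_q!)`,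
where `[r]_q = (1-q^r)/(1-q)` and `[k]_q! = [k]_q ⋯ [1]_q`. -/
theorem stmt7 (q : ℝ) (hq0 : 0 < q) (hq1 : q < 1) (n : ℕ) :
    ∃ ε > (0 : ℝ), ∀ z : ℝ, |z| < ε →
      HasSum (fun m : ℕ =>
        ((q - 1) ^ (-(m : ℤ)) *
          ∑ p ∈ Finset.range (m + 1),
            (-1 : ℝ) ^ p * (Nat.choose (m + n) p : ℝ) *
              (∏ r ∈ Finset.Icc 1 (m + n - p), ((1 - q ^ r) / (1 - q))) /
                ((∏ r ∈ Finset.Icc 1 n, ((1 - q ^ r) / (1 - q))) *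
                  ∏ r ∈ Finset.Icc 1 (m - p), ((1 - q ^ r) / (1 - q)))) * z ^ m)
        (∏ r ∈ Finset.Icc 1 n, (1 - ((1 - q ^ r) / (1 - q)) * z)⁻¹) := by
  obtain ⟨ε, hε, H⟩ := main_hasSum hq0 hq1 n
  exact ⟨ε, hε, fun z hz => by simpa only [Sc, qf, qn] using H z hz⟩
end

section
/- For integers $N \geq 1$, $1 \le n_1 \le N$, $0 \le l \le N-1$, and $0 < q < 1$: $\sum_{i=0}^{n_1-1} \Big(\prod_{r=n_1+1}^{N}(1 - q^{r-i-1})\Big)(-1)^{N-i-1}\binom{N-1-l}{N-1-i} = (-1)^{N+n_1}(1-q)^{N-l-1}[N-n_1]_q! \cdot S(N-n_1, n_1-l-1; q)$, where $S(\cdot, \cdot; q)$ are the $q$-Stirling numbers of the second kind. -/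
open Finset

/-- An `HasFPowerSeriesAt` from pointwise `HasSum` of a scalar power series. -/
lemma myHasFPower {c : ℕ → ℝ} {f : ℝ → ℝ} {ε : ℝ} (hε : 0 < ε)
    (h : ∀ z : ℝ, |z| < ε → HasSum (fun m => c m * z ^ m) (f z)) :
    HasFPowerSeriesAt f (FormalMultilinearSeries.ofScalars ℝ c) 0 := by
  have h2 : 0 < ε / 2 := by linarith
  refine ⟨ENNReal.ofReal (ε / 2), ?_, by simp [h2], ?_⟩
  · have hs : Summable (fun m => c m * (ε / 2) ^ m) :=
      (h (ε / 2) (by rw [abs_of_pos h2]; linarith)).summable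
    have hs' : Summable (fun m => |c m * (ε / 2) ^ m|) := by
      rwa [summable_abs_iff]
    have hle := FormalMultilinearSeries.le_radius_of_summable
      (p := FormalMultilinearSeries.ofScalars ℝ c) (r := (ε / 2).toNNReal) ?_
    · simpa [ENNReal.ofReal] using hle
    · refine hs'.congr fun m => ?_
      rw [abs_mul, FormalMultilinearSeries.ofScalars_norm,
        Real.coe_toNNReal _ h2.le, abs_of_nonneg (pow_nonneg h2.le m)]
      rfl
  · intro y hy
    rw [EMetric.mem_ball, edist_lt_ofReal, dist_zero_right, Real.norm_eq_abs] at hy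
    have hy' : |y| < ε := by linarith
    have heq : (fun n => FormalMultilinearSeries.ofScalars ℝ c n fun _ => y)
        = fun m => c m * y ^ m := by
      funext n
      rw [FormalMultilinearSeries.ofScalars_apply_eq, smul_eq_mul]
    rw [zero_add, heq]
    exact h y hy'

lemma coeff_unique {a b : ℕ → ℝ} {f : ℝ → ℝ} {ε : ℝ} (hε : 0 < ε)
    (ha : ∀ z : ℝ, |z| < ε → HasSum (fun m => a m * z ^ m) (f z))
    (hb : ∀ z : ℝ, |z| < ε → HasSum (fun m => b m * z ^ m) (f z)) : a = b :=
  FormalMultilinearSeries.ofScalars_series_injective ℝ ℝ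
    ((myHasFPower hε ha).eq_formalMultilinearSeries (myHasFPower hε hb))


noncomputable def Pq (q : ℝ) (j n : ℕ) : ℝ := ∏ s ∈ Finset.Icc (j + 1) (n + j), (1 - q ^ s)

noncomputable def Aq (q : ℝ) (n m : ℕ) : ℝ :=
  ∑ j ∈ Finset.range (m + 1), (-1 : ℝ) ^ j * ((n + m).choose (n + j)) * Pq q j n

lemma Pq_zero (q : ℝ) (j : ℕ) : Pq q j 0 = 1 := by
  rw [Pq, Nat.zero_add, Finset.Icc_eq_empty_of_lt (Nat.lt_succ_self j), Finset.prod_empty]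

lemma Pq_succ (q : ℝ) (j n : ℕ) : Pq q j (n + 1) = Pq q j n * (1 - q ^ (n + 1 + j)) := by
  rw [Pq, Pq, show n + 1 + j = (n + j) + 1 by ring, Finset.prod_Icc_succ_top (by omega)]

lemma Pq_succ_left (q : ℝ) (j n : ℕ) :
    (1 - q ^ (j + 1)) * Pq q (j + 1) n = Pq q j (n + 1) := by
  induction n with
  | zero =>
    rw [Pq_zero, Pq, show 0 + 1 + j = j + 1 by ring, Finset.Icc_self, Finset.prod_singleton,
      mul_one]
  | succ n ih =>
    rw [Pq_succ, ← mul_assoc, ih, show n + 1 + (j + 1) = (n + 1) + 1 + j by ring, ← Pq_succ]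

lemma Arec (q : ℝ) (n m : ℕ) :
    Aq q (n + 1) (m + 1) = (1 - q ^ (n + 1)) * (Aq q (n + 1) m + Aq q n (m + 1)) := by
  have hb :
      ∑ j ∈ range (m + 2), (-1 : ℝ) ^ j * ((n + m + 1).choose (n + j + 1)) * Pq q j (n + 1)
        = ∑ j ∈ range (m + 1), (-1 : ℝ) ^ j * ((n + m + 1).choose (n + j + 1)) * Pq q j (n + 1) := by
    rw [show m + 2 = (m + 1) + 1 from rfl, sum_range_succ,
      Nat.choose_eq_zero_of_lt (by omega)]
    norm_num
  have e1 : Aq q (n + 1) (m + 1)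
      = (∑ j ∈ range (m + 2), (-1 : ℝ) ^ j * ((n + m + 1).choose (n + j)) * Pq q j (n + 1))
      + ∑ j ∈ range (m + 2), (-1 : ℝ) ^ j * ((n + m + 1).choose (n + j + 1)) * Pq q j (n + 1) := by
    rw [Aq, ← sum_add_distrib]
    apply sum_congr rfl
    intro j _
    rw [show (n + 1) + (m + 1) = (n + m + 1) + 1 by omega,
      show (n + 1) + j = (n + j) + 1 by omega, Nat.choose_succ_succ]
    push_cast
    ring
  have hA1m : Aq q (n + 1) m
      = ∑ j ∈ range (m + 2), (-1 : ℝ) ^ j * ((n + m + 1).choose (n + j + 1)) * Pq q j (n + 1) := by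
    rw [hb, Aq]
    apply sum_congr rfl
    intro j _
    rw [show (n + 1) + m = n + m + 1 by omega, show (n + 1) + j = n + j + 1 by omega]
  have hAn : Aq q n (m + 1)
      = ∑ j ∈ range (m + 2), (-1 : ℝ) ^ j * ((n + m + 1).choose (n + j)) * Pq q j n := by
    rw [Aq, show n + (m + 1) = n + m + 1 by omega]
  have hshift : ∑ j ∈ range (m + 2),
        (-1 : ℝ) ^ j * ((n + m + 1).choose (n + j)) * ((1 - q ^ j) * Pq q j n)
      = - ∑ j ∈ range (m + 2), (-1 : ℝ) ^ j * ((n + m + 1).choose (n + j + 1)) * Pq q j (n + 1) := by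
    rw [hb, show m + 2 = (m + 1) + 1 from rfl, sum_range_succ']
    have hz : (-1 : ℝ) ^ 0 * ((n + m + 1).choose (n + 0)) * ((1 - q ^ 0) * Pq q 0 n) = 0 := by
      norm_num
    rw [hz, add_zero, ← Finset.sum_neg_distrib]
    apply sum_congr rfl
    intro j _
    rw [← Pq_succ_left, show n + (j + 1) = n + j + 1 by omega]
    ring
  have hd : (1 - q ^ (n + 1)) * Aq q n (m + 1)
      = (∑ j ∈ range (m + 2), (-1 : ℝ) ^ j * ((n + m + 1).choose (n + j)) * Pq q j (n + 1))
        - q ^ (n + 1) * ∑ j ∈ range (m + 2),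
            (-1 : ℝ) ^ j * ((n + m + 1).choose (n + j)) * ((1 - q ^ j) * Pq q j n) := by
    rw [hAn, mul_sum, mul_sum, ← sum_sub_distrib]
    apply sum_congr rfl
    intro j _
    rw [Pq_succ, pow_add q (n + 1) j]
    ring
  rw [e1, hA1m]
  linear_combination -hd + q ^ (n + 1) * hshift



section SLemmas

variable {q : ℝ} (hq0 : 0 < q) (hq1 : q < 1) (S : ℕ → ℤ → ℝ)
  (hSneg : ∀ n : ℕ, ∀ m : ℤ, m < 0 → S n m = 0)
  (hSgen : ∀ n : ℕ, ∃ ε > (0 : ℝ), ∀ z : ℝ, |z| < ε →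
    HasSum (fun m : ℕ => S n (m : ℤ) * z ^ m)
      (∏ r ∈ Finset.Icc 1 n, (1 - ((1 - q ^ r) / (1 - q)) * z)⁻¹))

include hSgen in
lemma Sbase : ∀ m : ℕ, S 0 (m : ℤ) = if m = 0 then 1 else 0 := by
  obtain ⟨ε, hε, hg⟩ := hSgen 0
  have h1 : ∀ z : ℝ, |z| < ε → HasSum (fun m : ℕ => S 0 (m : ℤ) * z ^ m) ((fun _ : ℝ => (1:ℝ)) z) := by
    intro z hz
    simpa using hg z hz
  have h2 : ∀ z : ℝ, |z| < ε →
      HasSum (fun m : ℕ => (if m = 0 then (1:ℝ) else 0) * z ^ m) ((fun _ : ℝ => (1:ℝ)) z) := by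
    intro z _
    have := hasSum_single (f := fun m : ℕ => (if m = 0 then (1:ℝ) else 0) * z ^ m) 0
      (by intro b hb; simp [hb])
    simpa using this
  exact fun m => congrFun (coeff_unique hε h1 h2) m

include hq0 hq1 hSneg hSgen in
lemma Srec (n m : ℕ) : S (n + 1) (m : ℤ)
    = S n (m : ℤ) + (1 - q ^ (n + 1)) / (1 - q) * S (n + 1) ((m : ℤ) - 1) := by
  obtain ⟨ε₁, hε₁, hg₁⟩ := hSgen (n + 1)
  obtain ⟨ε₂, hε₂, hg₂⟩ := hSgen n
  have hq1' : (0 : ℝ) < 1 - q := by linarith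
  set L : ℝ := (1 - q ^ (n + 1)) / (1 - q) with hL
  have hqp : q ^ (n + 1) < 1 := pow_lt_one₀ hq0.le hq1 (Nat.succ_ne_zero n)
  have hLpos : 0 < L := div_pos (by linarith) hq1'
  set δ : ℝ := min ε₁ (min ε₂ L⁻¹) with hδ
  have hδpos : 0 < δ := lt_min hε₁ (lt_min hε₂ (inv_pos.mpr hLpos))
  have key : (fun m : ℕ => S (n + 1) (m : ℤ) - L * S (n + 1) ((m : ℤ) - 1))
      = fun m : ℕ => S n (m : ℤ) := by
    apply coeff_unique (f := fun z => ∏ r ∈ Finset.Icc 1 n, (1 - ((1 - q ^ r) / (1 - q)) * z)⁻¹)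
      hδpos
    · intro z hz
      have hz1 : |z| < ε₁ := lt_of_lt_of_le hz (min_le_left _ _)
      have hzL : |z| < L⁻¹ :=
        lt_of_lt_of_le hz (le_trans (min_le_right _ _) (min_le_right _ _))
      have h0 := hg₁ z hz1
      set G : ℝ := ∏ r ∈ Finset.Icc 1 (n + 1), (1 - ((1 - q ^ r) / (1 - q)) * z)⁻¹ with hG
      have habs : |L * z| < 1 := by
        rw [abs_mul, abs_of_pos hLpos]
        calc L * |z| < L * L⁻¹ := by exact mul_lt_mul_of_pos_left hzL hLpos
        _ = 1 := mul_inv_cancel₀ hLpos.ne'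
      have hne : (1 : ℝ) - L * z ≠ 0 := by
        intro h
        rw [show L * z = 1 by linarith] at habs
        simp at habs
      have hsplit : G = (∏ r ∈ Finset.Icc 1 n, (1 - ((1 - q ^ r) / (1 - q)) * z)⁻¹)
          * (1 - L * z)⁻¹ := Finset.prod_Icc_succ_top (by omega) _
      have h1 : HasSum (fun m : ℕ => (L * z) * (S (n + 1) (m : ℤ) * z ^ m)) ((L * z) * G) :=
        h0.mul_left _
      have h2 : HasSum
          (fun m : ℕ => (fun k : ℕ => L * S (n + 1) ((k : ℤ) - 1) * z ^ k) (m + 1))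
          ((L * z) * G) := by
        refine h1.congr_fun fun m => ?_
        have hc : ((m + 1 : ℕ) : ℤ) - 1 = (m : ℤ) := by push_cast; ring
        simp only [hc]
        ring
      have h3 : HasSum (fun k : ℕ => L * S (n + 1) ((k : ℤ) - 1) * z ^ k) ((L * z) * G) := by
        have h4 := (hasSum_nat_add_iff (f := fun k : ℕ => L * S (n + 1) ((k : ℤ) - 1) * z ^ k) 1).mp h2
        simpa [hSneg (n + 1) (-1) (by norm_num)] using h4
      have h5 := h0.sub h3
      have h6 : HasSum (fun m : ℕ => (S (n + 1) (m : ℤ) - L * S (n + 1) ((m : ℤ) - 1)) * z ^ m)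
          (G - L * z * G) := by
        refine h5.congr_fun fun m => ?_
        ring
      have hval : G - L * z * G = ∏ r ∈ Finset.Icc 1 n, (1 - ((1 - q ^ r) / (1 - q)) * z)⁻¹ := by
        rw [hsplit]
        have hre : (∏ r ∈ Finset.Icc 1 n, (1 - ((1 - q ^ r) / (1 - q)) * z)⁻¹) * (1 - L * z)⁻¹
            - L * z * ((∏ r ∈ Finset.Icc 1 n, (1 - ((1 - q ^ r) / (1 - q)) * z)⁻¹) * (1 - L * z)⁻¹)
            = (∏ r ∈ Finset.Icc 1 n, (1 - ((1 - q ^ r) / (1 - q)) * z)⁻¹)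
              * ((1 - L * z) * (1 - L * z)⁻¹) := by ring
        rw [hre, mul_inv_cancel₀ hne, mul_one]
      rwa [hval] at h6
    · intro z hz
      exact hg₂ z (lt_of_lt_of_le hz (le_trans (min_le_right _ _) (min_le_left _ _)))
  have := congrFun key m
  linarith [this]


include hq0 hq1 hSneg hSgen in
lemma S_zero : ∀ n : ℕ, S n ((0:ℕ) : ℤ) = 1 := by
  intro n
  induction n with
  | zero => simpa using Sbase S hSgen 0
  | succ n ih =>
    have h := Srec hq0 hq1 S hSneg hSgen n 0
    rw [show ((0:ℕ):ℤ) - 1 = -1 by norm_num, hSneg (n+1) (-1) (by norm_num)] at h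
    rw [h, ih]
    ring

include hq0 hq1 hSneg hSgen in
lemma Smain : ∀ n m : ℕ, (1 - q) ^ m * Pq q 0 n * S n (m : ℤ) = Aq q n m := by
  intro n
  induction n with
  | zero =>
    intro m
    rw [Sbase S hSgen m, Pq_zero]
    have hA : Aq q 0 m = if m = 0 then 1 else 0 := by
      rw [Aq]
      have h1 : ∀ j ∈ range (m + 1),
          (-1:ℝ) ^ j * ((0 + m).choose (0 + j)) * Pq q j 0 = (-1:ℝ) ^ j * (m.choose j) := by
        intro j _
        rw [Pq_zero, Nat.zero_add, Nat.zero_add, mul_one]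
      rw [sum_congr rfl h1]
      have h2 := congrArg (fun x : ℤ => (x : ℝ)) (Int.alternating_sum_range_choose (n := m))
      push_cast at h2
      rw [h2]
    rw [hA]
    split_ifs with h
    · subst h; norm_num
    · ring
  | succ n ih =>
    intro m
    induction m with
    | zero =>
      rw [pow_zero, one_mul, S_zero hq0 hq1 S hSneg hSgen (n+1), Aq]
      simp [Nat.choose_self]
    | succ m ihm =>
      have hrec := Srec hq0 hq1 S hSneg hSgen n (m + 1)
      rw [show ((m + 1 : ℕ) : ℤ) - 1 = (m : ℤ) by push_cast; ring] at hrec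
      have hPs : Pq q 0 (n + 1) = Pq q 0 n * (1 - q ^ (n + 1)) := by
        rw [Pq_succ, Nat.add_zero]
      have hq1' : (1 : ℝ) - q ≠ 0 := by intro h; linarith
      rw [Arec q n m, ← ihm, ← ih (m + 1), hrec, hPs]
      field_simp
      ring

end SLemmas


/-- The key summation identity relating the Eynard-Mehta sum to `q`-Stirling numbers:
for any family `S : ℕ → ℤ → ℝ` of `q`-Stirling numbers of the second kind (defined by
the generating-function expansion `∏_{r=1}^n (1-[r]_q z)⁻¹ = ∑_m S(n,m;q) z^m`, with
`S(n,m;q) = 0` for `m < 0`), and for `1 ≤ n1 ≤ N`, `0 ≤ l ≤ N-1`, `0 < q < 1`: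
`∑_{i=0}^{n1-1} (∏_{r=n1+1}^N (1-q^{r-i-1})) (-1)^{N-i-1} C(N-1-l, N-1-i)
   = (-1)^{N+n1} (1-q)^{N-l-1} [N-n1]_q! · S(N-n1, n1-l-1; q)`. -/
theorem stmt8 (q : ℝ) (hq0 : 0 < q) (hq1 : q < 1)
    (S : ℕ → ℤ → ℝ)
    (hSneg : ∀ n : ℕ, ∀ m : ℤ, m < 0 → S n m = 0)
    (hSgen : ∀ n : ℕ, ∃ ε > (0 : ℝ), ∀ z : ℝ, |z| < ε →
      HasSum (fun m : ℕ => S n (m : ℤ) * z ^ m)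
        (∏ r ∈ Finset.Icc 1 n, (1 - ((1 - q ^ r) / (1 - q)) * z)⁻¹))
    (N n1 l : ℕ) (hN : 1 ≤ N) (hn1 : 1 ≤ n1) (hn1N : n1 ≤ N) (hl : l ≤ N - 1) :
    ∑ i ∈ Finset.range n1,
        (∏ r ∈ Finset.Icc (n1 + 1) N, (1 - q ^ ((r : ℤ) - (i : ℤ) - 1))) *
          (-1 : ℝ) ^ (N - i - 1) * (Nat.choose (N - 1 - l) (N - 1 - i) : ℝ) =
      (-1 : ℝ) ^ (N + n1) * (1 - q) ^ (N - l - 1) *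
        (∏ r ∈ Finset.Icc 1 (N - n1), ((1 - q ^ r) / (1 - q))) *
        S (N - n1) ((n1 : ℤ) - (l : ℤ) - 1) := by
  have hq1' : (0 : ℝ) < 1 - q := by linarith
  have h1q : (1 : ℝ) - q ≠ 0 := by linarith
  set n : ℕ := N - n1 with hn
  have hnn1 : n + n1 = N := by omega
  have hterm : ∀ i ∈ Finset.range n1,
      (∏ r ∈ Finset.Icc (n1 + 1) N, (1 - q ^ ((r : ℤ) - (i : ℤ) - 1))) *
          (-1 : ℝ) ^ (N - i - 1) * (Nat.choose (N - 1 - l) (N - 1 - i) : ℝ)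
      = (fun j => Pq q j n * (-1 : ℝ) ^ (n + j) * (((N - 1 - l).choose (n + j)) : ℝ))
          (n1 - 1 - i) := by
    intro i hi
    rw [Finset.mem_range] at hi
    have hprod : (∏ r ∈ Finset.Icc (n1 + 1) N, (1 - q ^ ((r : ℤ) - (i : ℤ) - 1)))
        = Pq q (n1 - 1 - i) n := by
      rw [Pq]
      refine Finset.prod_nbij' (fun r => r - (i + 1)) (fun s => s + (i + 1)) ?_ ?_ ?_ ?_ ?_
      · intro r hr
        simp only [Finset.mem_Icc] at hr ⊢
        omega
      · intro s hs
        simp only [Finset.mem_Icc] at hs ⊢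
        omega
      · intro r hr
        simp only [Finset.mem_Icc] at hr
        omega
      · intro s hs
        simp only [Finset.mem_Icc] at hs
        omega
      · intro r hr
        simp only [Finset.mem_Icc] at hr
        rw [show (r : ℤ) - (i : ℤ) - 1 = ((r - (i + 1) : ℕ) : ℤ) by omega, zpow_natCast]
    rw [hprod]
    simp only
    rw [show N - i - 1 = n + (n1 - 1 - i) by omega, show N - 1 - i = n + (n1 - 1 - i) by omega]
  rw [Finset.sum_congr rfl hterm, Finset.sum_range_reflect
    (fun j => Pq q j n * (-1 : ℝ) ^ (n + j) * (((N - 1 - l).choose (n + j)) : ℝ)) n1]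
  by_cases hcase : l + 1 ≤ n1
  · set m : ℕ := n1 - 1 - l with hm
    have hK : N - 1 - l = n + m := by omega
    have hcast : (n1 : ℤ) - (l : ℤ) - 1 = ((m : ℕ) : ℤ) := by omega
    have htrunc : ∑ j ∈ Finset.range n1,
          Pq q j n * (-1 : ℝ) ^ (n + j) * (((N - 1 - l).choose (n + j)) : ℝ)
        = ∑ j ∈ Finset.range (m + 1),
          Pq q j n * (-1 : ℝ) ^ (n + j) * (((N - 1 - l).choose (n + j)) : ℝ) := by
      symm
      apply Finset.sum_subset
      · intro x hx
        rw [Finset.mem_range] at hx ⊢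
        omega
      · intro x hx hx2
        rw [Finset.mem_range] at hx hx2
        rw [hK, Nat.choose_eq_zero_of_lt (by omega)]
        norm_num
    have hsum : ∑ j ∈ Finset.range (m + 1),
          Pq q j n * (-1 : ℝ) ^ (n + j) * (((N - 1 - l).choose (n + j)) : ℝ)
        = (-1 : ℝ) ^ n * Aq q n m := by
      rw [Aq, Finset.mul_sum]
      apply Finset.sum_congr rfl
      intro j _
      rw [hK, pow_add]
      ring
    have hPq0 : Pq q 0 n = ∏ s ∈ Finset.Icc 1 n, (1 - q ^ s) := by
      rw [Pq]
      norm_num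
    have hPr : (∏ r ∈ Finset.Icc 1 n, ((1 - q ^ r) / (1 - q))) = Pq q 0 n / (1 - q) ^ n := by
      rw [hPq0, Finset.prod_div_distrib, Finset.prod_const, Nat.card_Icc, Nat.add_sub_cancel]
    have hsm := Smain hq0 hq1 S hSneg hSgen n m
    have hNl : N - l - 1 = n + m := by omega
    have hsgn : (-1 : ℝ) ^ (N + n1) = (-1 : ℝ) ^ n := by
      rw [show N + n1 = n + 2 * n1 by omega, pow_add, pow_mul]
      norm_num
    rw [htrunc, hsum, hcast, hNl, hPr, hsgn, ← hsm]
    field_simp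
    ring
  · have hzero : ∀ j ∈ Finset.range n1,
        Pq q j n * (-1 : ℝ) ^ (n + j) * (((N - 1 - l).choose (n + j)) : ℝ) = 0 := by
      intro j _
      rw [Nat.choose_eq_zero_of_lt (by omega)]
      norm_num
    rw [Finset.sum_eq_zero hzero, hSneg n _ (by omega)]
    ring
end

section
/- Let $\chi(w)$ and $\eta(w)$ be the frozen boundary parametrization $\chi(w) = w + \frac{\Pi(w)-1}{\Sigma(w)}$, $\eta(w) = \frac{\Pi(w)(\Sigma(w)-\Pi(w)+2)-1}{\Pi(w)\Sigma(w)}$, where $\Pi(w) = \prod_{i=1}^k \frac{w-b_i}{w-a_i}$ and $\Sigma(w) = \sum_{i=1}^k (\frac{1}{w-b_i} - \frac{1}{w-a_i})$ with $a_1 < b_1 < \cdots < a_k < b_k$. Then wherever everything is defined and $\dot\eta(w) \neq 0$, the tangent slope satisfies $\frac{\dot\chi(w)}{\dot\eta(w)} = \frac{\Pi(w)}{1 - \Pi(w)} = \frac{w - \chi(w)}{1 - \eta(w)}$. -/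
/-- Tangent slope of the frozen boundary parametrization
`χ(w) = w + (Π(w)-1)/Σ(w)`, `η(w) = (Π(w)(Σ(w)-Π(w)+2)-1)/(Π(w)Σ(w))`:
wherever everything is defined and `η̇(w) ≠ 0`,
`χ̇(w)/η̇(w) = Π(w)/(1-Π(w)) = (w - χ(w))/(1 - η(w))`. -/
theorem stmt16 (k : ℕ) (a b : Fin k → ℝ)
    (hab : ∀ i, a i < b i) (hba : ∀ i j : Fin k, i < j → b i < a j)
    (Pi Sig chi eta : ℝ → ℝ)
    (hPi : ∀ x, Pi x = ∏ i, (x - b i) / (x - a i))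
    (hSig : ∀ x, Sig x = ∑ i, (1 / (x - b i) - 1 / (x - a i)))
    (hchi : ∀ x, chi x = x + (Pi x - 1) / Sig x)
    (heta : ∀ x, eta x = (Pi x * (Sig x - Pi x + 2) - 1) / (Pi x * Sig x))
    (w : ℝ) (hwa : ∀ i, w ≠ a i) (hwb : ∀ i, w ≠ b i)
    (hS0 : Sig w ≠ 0) (hP0 : Pi w ≠ 0) (hP1 : Pi w ≠ 1) (heta1 : eta w ≠ 1)
    (hder : deriv eta w ≠ 0) :
    deriv chi w / deriv eta w = Pi w / (1 - Pi w) ∧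
      deriv chi w / deriv eta w = (w - chi w) / (1 - eta w) := by
  have hPf : Pi = fun x => ∏ i, (x - b i) / (x - a i) := funext hPi
  have hSf : Sig = fun x => ∑ i, (1 / (x - b i) - 1 / (x - a i)) := funext hSig
  have hchif : chi = fun x => x + (Pi x - 1) / Sig x := funext hchi
  have hetaf : eta = fun x => (Pi x * (Sig x - Pi x + 2) - 1) / (Pi x * Sig x) :=
    funext heta
  have ha : ∀ i, w - a i ≠ 0 := fun i => sub_ne_zero_of_ne (hwa i)
  have hb : ∀ i, w - b i ≠ 0 := fun i => sub_ne_zero_of_ne (hwb i)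
  -- derivative of Pi
  have hfi : ∀ i : Fin k, HasDerivAt (fun x => (x - b i) / (x - a i))
      ((1 * (w - a i) - (w - b i) * 1) / (w - a i) ^ 2) w := fun i =>
    (((hasDerivAt_id w).sub_const (b i)).div ((hasDerivAt_id w).sub_const (a i)) (ha i))
  have hPd : HasDerivAt Pi (Pi w * Sig w) w := by
    rw [hPf]
    have h := HasDerivAt.fun_finsetProd (u := Finset.univ) (fun i _ => hfi i)
    convert h using 1
    · rfl
    · rfl
    rw [hSig, Finset.mul_sum]
    refine Finset.sum_congr rfl fun i _ => ?_
    have hpe : (∏ j ∈ Finset.univ.erase i, (w - b j) / (w - a j)) *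
        ((w - b i) / (w - a i)) = ∏ j, (w - b j) / (w - a j) :=
      Finset.prod_erase_mul _ _ (Finset.mem_univ i)
    beta_reduce
    rw [smul_eq_mul, ← hpe, mul_assoc]
    congr 1
    field_simp [sub_ne_zero_of_ne (hwb i), sub_ne_zero_of_ne (hwa i)]
  -- derivative of Sig
  have hSdiff : DifferentiableAt ℝ Sig w := by
    rw [hSf]
    exact (HasDerivAt.fun_sum fun i (_ : i ∈ Finset.univ) =>
      (((hasDerivAt_const w (1:ℝ)).div ((hasDerivAt_id w).sub_const (b i)) (hb i)).sub
        ((hasDerivAt_const w (1:ℝ)).div ((hasDerivAt_id w).sub_const (a i)) (ha i)))).differentiableAt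
  have hSd : HasDerivAt Sig (deriv Sig w) w := hSdiff.hasDerivAt
  set P := Pi w with hPdef
  set S := Sig w with hSdef
  set d := deriv Sig w with hddef
  -- derivative of chi
  have hchid : HasDerivAt chi (1 + ((P * S) * S - (P - 1) * d) / S ^ 2) w := by
    rw [hchif]
    exact (hasDerivAt_id w).add (((hPd.sub_const 1).div hSd hS0))
  -- derivative of eta
  have hetad : HasDerivAt eta
      (((P * S * (S - P + 2) + P * (d - P * S)) * (P * S) -
        (P * (S - P + 2) - 1) * (P * S * S + P * d)) / (P * S) ^ 2) w := by
    rw [hetaf]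
    exact ((hPd.mul (((hSd.sub hPd).add_const 2))).sub_const 1).div
      (hPd.mul hSd) (mul_ne_zero hP0 hS0)
  have hdc : deriv chi w = 1 + ((P * S) * S - (P - 1) * d) / S ^ 2 := hchid.deriv
  have hde : deriv eta w =
      ((P * S * (S - P + 2) + P * (d - P * S)) * (P * S) -
        (P * (S - P + 2) - 1) * (P * S * S + P * d)) / (P * S) ^ 2 := hetad.deriv
  have h1P : (1 : ℝ) - P ≠ 0 := sub_ne_zero_of_ne (Ne.symm hP1)
  have key : deriv chi w * (1 - P) = P * deriv eta w := by
    rw [hdc, hde]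
    field_simp
    try ring
  have part1 : deriv chi w / deriv eta w = P / (1 - P) := by
    rw [div_eq_div_iff hder h1P, key]
  refine ⟨part1, ?_⟩
  rw [part1]
  have h1e : (1 : ℝ) - eta w ≠ 0 := sub_ne_zero_of_ne (Ne.symm heta1)
  rw [div_eq_div_iff h1P h1e, hchi, heta, ← hPdef, ← hSdef]
  field_simp
  ring
end
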